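/- Transfer identity: let N = N₀ ⊕ N₁ orthogonally with ζ ∈ SO(N), ζ^k = Id_N, ζ = Id on N₀ and Id-ζ invertible on N₁; let γ ∈ ℂ with kγ = α+βτ (γ of order k in E_τ), J ∈ so(N) commuting with ζ with exp(J/k) = ζ, J = J₀⊕J₁; choose orientations o_{N₀}, o_{N₁}, o_N. Then for R ∈ so(N,J) and y ∈ ℂ sufficiently small: Z(0,J₀;τ,N₀,o_{N₀})(yJ₀+R₀) · [Os(J₁/k,o_{N₁})^{α+β} · Z(γ,J₁;τ,N₁,o_{N₁})(yJ₁+R₁)] = ε · Z(γ+y,J;τ,N,o_N)(R), where ε = Os(J₁/k,o_{N₁})^{α+β}·ε(J₀/k,N₀)^{α+β}·(o_N/(o_{N₀}∧o_{N₁})) and R₀,R₁ are the restrictions of R. -/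

import Mathlib

/- STATEMENT 18 (transfer formula, Theorem \ref{th:MainformulaElliptic}, diagonal model):
N = N₀⊕N₁, ζ ∈ SO(N), ζ^k = Id, ζ = Id on N₀ (rotation numbers of J₀ equal to kA_j) and
Id-ζ invertible on N₁ (rotation numbers a₁_j of J₁ not divisible by k); γ of order k in
E_τ with kγ = α+βτ; J = J₀⊕J₁ commutes with ζ, exp(J/k) = ζ; orientations on N₀, N₁, N
are recorded in the diagonal model by the signs ν₀, ν₁, ν, and Os(J₁/k,o_{N₁}) by the sign
os. Then for R ∈ so(N,J) (acting by 2iπr₀_j, 2iπr₁_j) and y: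
Z(0,J₀;τ,N₀,o_{N₀})(yJ₀+R₀)·[os^{α+β}·Z(γ,J₁;τ,N₁,o_{N₁})(yJ₁+R₁)]
  = ε·Z(γ+y,J;τ,N,o_N)(R),
ε = os^{α+β}·ε(J₀/k,N₀)^{α+β}·(o_N/(o_{N₀}∧o_{N₁})), with ε(J₀/k,N₀) = (-1)^{ΣA_j} and
o_N/(o_{N₀}∧o_{N₁}) = ν·ν₀·ν₁. -/

open Complex Real

noncomputable section

def qhex (τ : ℂ) : ℂ := Complex.exp ((π : ℂ) * I * τ)

def qex (τ : ℂ) : ℂ := Complex.exp (2 * (π : ℂ) * I * τ)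

def phiNumF (τ z : ℂ) (n : ℕ) : ℂ :=
  (1 + qhex τ ^ (2 * n + 1) * Complex.exp (2 * (π : ℂ) * I * z)) *
    (1 + qhex τ ^ (2 * n + 1) * Complex.exp (-(2 * (π : ℂ) * I * z)))

def phiDenF (τ z : ℂ) (n : ℕ) : ℂ :=
  (1 - qex τ ^ (n + 1) * Complex.exp (2 * (π : ℂ) * I * z)) *
    (1 - qex τ ^ (n + 1) * Complex.exp (-(2 * (π : ℂ) * I * z)))

def Phi1 (τ z : ℂ) : ℂ :=
  (Complex.exp (-((π : ℂ) * I * z)) - Complex.exp ((π : ℂ) * I * z))⁻¹ *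
    ((∏' n : ℕ, phiNumF τ z n) / (∏' n : ℕ, phiDenF τ z n))

/-- Str(e^{γJ}e^R,S_N,o_N) in the diagonal model. -/
def Zstr {ι : Type*} [Fintype ι] (ν : ℂ) (a : ι → ℤ) (r : ι → ℂ) (γ : ℂ) : ℂ :=
  ν * ∏ j, (Complex.exp (-((π : ℂ) * I * ((a j : ℂ) * γ + r j))) -
      Complex.exp ((π : ℂ) * I * ((a j : ℂ) * γ + r j)))

/-- Z(γ,J;τ,N,o_N)(R) = Tr(e^{γJ}e^R,W_{1,q}(N⊗ℂ))/Str(e^{γJ}e^R,S_N,o_N) in the diagonal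
model, with rotation numbers a and R-eigenvalue data r. -/
def Zdiag (τ : ℂ) {ι : Type*} [Fintype ι] (ν : ℂ) (a : ι → ℤ) (r : ι → ℂ) (γ : ℂ) : ℂ :=
  (∏ j, ∏' n : ℕ, phiNumF τ ((a j : ℂ) * γ + r j) n) /
    ((∏ j, ∏' n : ℕ, phiDenF τ ((a j : ℂ) * γ + r j) n) * Zstr ν a r γ)

namespace TF

lemma qhex_ne (τ : ℂ) : qhex τ ≠ 0 := Complex.exp_ne_zero _
lemma qex_ne (τ : ℂ) : qex τ ≠ 0 := Complex.exp_ne_zero _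
lemma qex_eq_sq (τ : ℂ) : qex τ = qhex τ ^ 2 := by
  rw [qex, qhex, ← Complex.exp_nat_mul]; norm_num; ring_nf

/-- Sign/strand factor. -/
def Sf (z : ℂ) : ℂ :=
  Complex.exp (-((π : ℂ) * I * z)) - Complex.exp ((π : ℂ) * I * z)

/-- Per-coordinate partition function factor. -/
def F (τ z : ℂ) : ℂ :=
  (∏' n : ℕ, phiNumF τ z n) / ((∏' n : ℕ, phiDenF τ z n) * Sf z)

/-- Nonvanishing condition on `u = exp(2πiz)` stable under lattice shifts. -/
def Hc (τ u : ℂ) : Prop :=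
  (∀ m : ℤ, 1 + qhex τ ^ (2 * m + 1) * u ≠ 0) ∧ (∀ m : ℤ, 1 - qex τ ^ m * u ≠ 0)

lemma aux_add {a u : ℂ} (ha : a ≠ 0) (hu : u ≠ 0) (h : 1 + a * u⁻¹ ≠ 0) :
    1 + a⁻¹ * u ≠ 0 := by
  have h1 : 1 + a * u⁻¹ = (u + a) * u⁻¹ := by field_simp
  have h2 : 1 + a⁻¹ * u = (u + a) * a⁻¹ := by field_simp; ring
  rw [h1] at h
  rw [h2]
  exact mul_ne_zero (fun h0 => h (by rw [h0, zero_mul])) (inv_ne_zero ha)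

lemma aux_sub {a u : ℂ} (ha : a ≠ 0) (hu : u ≠ 0) (h : 1 - a * u⁻¹ ≠ 0) :
    1 - a⁻¹ * u ≠ 0 := by
  have h1 : 1 - a * u⁻¹ = (u - a) * u⁻¹ := by field_simp
  have h2 : 1 - a⁻¹ * u = -((u - a) * a⁻¹) := by field_simp; ring
  rw [h1] at h
  rw [h2]
  simp only [neg_ne_zero]
  exact mul_ne_zero (fun h0 => h (by rw [h0, zero_mul])) (inv_ne_zero ha)

lemma Sf_eq (z : ℂ) :
    Sf z = Complex.exp (-((π : ℂ) * I * z)) * (1 - Complex.exp (2 * (π : ℂ) * I * z)) := by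
  rw [Sf, mul_sub, mul_one, ← Complex.exp_add]
  ring_nf

/-- Derive `Hc` from the nonvanishing hypotheses at a point. -/
lemma Hc_of (τ z : ℂ) (hnum : ∀ n, phiNumF τ z n ≠ 0) (hden : ∀ n, phiDenF τ z n ≠ 0)
    (hS : Sf z ≠ 0) : Hc τ (Complex.exp (2 * (π : ℂ) * I * z)) := by
  set u := Complex.exp (2 * (π : ℂ) * I * z) with hudef
  have hu : u ≠ 0 := Complex.exp_ne_zero _
  have huinv : Complex.exp (-(2 * (π : ℂ) * I * z)) = u⁻¹ := by
    rw [hudef, ← Complex.exp_neg]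
  constructor
  · intro m
    rcases le_or_gt 0 m with hm | hm
    · obtain ⟨n, rfl⟩ := Int.eq_ofNat_of_zero_le hm
      have := (mul_ne_zero_iff.mp (hnum n)).1
      convert this using 3
      norm_cast
    · obtain ⟨n, rfl⟩ : ∃ n : ℕ, m = -(n : ℤ) - 1 := by
        refine ⟨(-m - 1).toNat, ?_⟩
        omega
      have h2 := (mul_ne_zero_iff.mp (hnum n)).2
      rw [huinv] at h2
      have := aux_add (a := qhex τ ^ (2 * n + 1)) (pow_ne_zero _ (qhex_ne τ)) hu h2
      convert this using 3
      rw [← zpow_natCast (qhex τ) (2 * n + 1), ← zpow_neg]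
      congr 1
      push_cast
      ring
  · intro m
    rcases lt_trichotomy m 0 with hm | hm | hm
    · obtain ⟨n, rfl⟩ : ∃ n : ℕ, m = -((n : ℤ) + 1) := by
        refine ⟨(-m - 1).toNat, ?_⟩
        omega
      have h2 := (mul_ne_zero_iff.mp (hden n)).2
      rw [huinv] at h2
      have := aux_sub (a := qex τ ^ (n + 1)) (pow_ne_zero _ (qex_ne τ)) hu h2
      convert this using 3
      rw [zpow_neg]; norm_cast
    · subst hm
      rw [Sf_eq] at hS
      have := (mul_ne_zero_iff.mp hS).2
      simpa using this
    · obtain ⟨n, rfl⟩ : ∃ n : ℕ, m = (n : ℤ) + 1 := by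
        refine ⟨(m - 1).toNat, ?_⟩
        omega
      have := (mul_ne_zero_iff.mp (hden n)).1
      convert this using 3
      norm_cast

/-- `Hc` is stable under multiplying `u` by an integer power of `q`. -/
lemma Hc_shift {τ u : ℂ} (h : Hc τ u) (d : ℤ) : Hc τ (qex τ ^ d * u) := by
  constructor
  · intro m
    have := h.1 (m + d)
    convert this using 2
    rw [qex_eq_sq, ← zpow_natCast (qhex τ) 2, ← zpow_mul]
    rw [← mul_assoc, ← zpow_add₀ (qhex_ne τ)]
    congr 2
    ring
  · intro m
    have := h.2 (m + d)
    convert this using 2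
    rw [← mul_assoc, ← zpow_add₀ (qex_ne τ)]

lemma norm_qhex_lt (τ : ℂ) (hτ : 0 < τ.im) : ‖qhex τ‖ < 1 := by
  rw [qhex, Complex.norm_exp, Real.exp_lt_one_iff]
  have : ((π : ℂ) * I * τ).re = -(π * τ.im) := by
    simp [Complex.mul_re, Complex.mul_im]
  rw [this]
  simpa using mul_pos Real.pi_pos hτ

lemma mult_one_add {x c : ℂ} (hx : ‖x‖ < 1) (h0 : ∀ n : ℕ, 1 + c * x ^ n ≠ 0) :
    Multipliable (fun n : ℕ => 1 + c * x ^ n) := by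
  have hlog : Summable fun n : ℕ => Complex.log (1 + c * x ^ n) := by
    have hgeo : Summable fun n : ℕ => (3/2 : ℝ) * (‖c‖ * ‖x‖ ^ n) :=
      ((summable_geometric_of_norm_lt_one (by simpa using hx)).mul_left ‖c‖).mul_left _
    apply Summable.of_norm_bounded_eventually_nat hgeo
    have hto : Filter.Tendsto (fun n : ℕ => ‖c * x ^ n‖) Filter.atTop (nhds 0) := by
      have h1 : Filter.Tendsto (fun n : ℕ => x ^ n) Filter.atTop (nhds 0) :=
        tendsto_pow_atTop_nhds_zero_of_norm_lt_one hx
      have := (h1.const_mul c).norm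
      simpa using this
    have hev : ∀ᶠ n in Filter.atTop, ‖c * x ^ n‖ ≤ 1/2 :=
      hto.eventually_le_const (by norm_num)
    filter_upwards [hev] with n hn
    calc ‖Complex.log (1 + c * x ^ n)‖ ≤ 3/2 * ‖c * x ^ n‖ :=
          Complex.norm_log_one_add_half_le_self hn
      _ ≤ 3/2 * (‖c‖ * ‖x‖ ^ n) := by rw [norm_mul, norm_pow]
  exact Complex.multipliable_of_summable_log hlog

lemma hfp_of {τ u : ℂ} (hH : Hc τ u) (hune : u ≠ 0) (n : ℕ) :
    (1 : ℂ) + (qhex τ * u) * (qhex τ ^ 2) ^ n ≠ 0 := by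
  have h1 := hH.1 n
  rw [show (2 * (n : ℤ) + 1) = ((2 * n + 1 : ℕ) : ℤ) by push_cast; ring, zpow_natCast] at h1
  intro h0
  exact h1 (by linear_combination h0)

lemma hfm_of {τ u : ℂ} (hH : Hc τ u) (hune : u ≠ 0) (n : ℕ) :
    (1 : ℂ) + (qhex τ * u⁻¹) * (qhex τ ^ 2) ^ n ≠ 0 := by
  have h1 := hH.1 (-(n : ℤ) - 1)
  rw [show (2 * (-(n : ℤ) - 1) + 1) = -((2 * n + 1 : ℕ) : ℤ) by push_cast; ring,
    zpow_neg, zpow_natCast] at h1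
  rw [mul_comm] at h1
  have h3 := aux_add (a := u) hune (pow_ne_zero _ (qhex_ne τ)) h1
  intro h0
  exact h3 (by linear_combination h0)

lemma hgp_of {τ u : ℂ} (hH : Hc τ u) (hune : u ≠ 0) (n : ℕ) :
    (1 : ℂ) + (-(qex τ * u)) * qex τ ^ n ≠ 0 := by
  have h1 := hH.2 ((n : ℤ) + 1)
  rw [show ((n : ℤ) + 1) = ((n + 1 : ℕ) : ℤ) by push_cast; ring, zpow_natCast] at h1
  intro h0
  exact h1 (by linear_combination h0)

lemma hgm_of {τ u : ℂ} (hH : Hc τ u) (hune : u ≠ 0) (n : ℕ) :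
    (1 : ℂ) + (-(qex τ * u⁻¹)) * qex τ ^ n ≠ 0 := by
  have h1 := hH.2 (-((n : ℤ) + 1))
  rw [show (-((n : ℤ) + 1)) = -((n + 1 : ℕ) : ℤ) by push_cast; ring,
    zpow_neg, zpow_natCast] at h1
  rw [mul_comm] at h1
  have h3 := aux_sub (a := u) hune (pow_ne_zero _ (qex_ne τ)) h1
  intro h0
  exact h3 (by linear_combination h0)

set_option maxHeartbeats 2000000 in
lemma F_shift_tau {τ : ℂ} (hτ : 0 < τ.im) (z : ℂ)
    (hH : Hc τ (Complex.exp (2 * (π : ℂ) * I * z))) : F τ (z + τ) = -F τ z := by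
  set qh := qhex τ with hqh
  set q := qex τ with hq
  set u := Complex.exp (2 * (π : ℂ) * I * z) with hu
  have hune : u ≠ 0 := Complex.exp_ne_zero _
  have hqhne : qh ≠ 0 := qhex_ne τ
  have hqne : q ≠ 0 := qex_ne τ
  have hq2 : q = qh ^ 2 := qex_eq_sq τ
  have hlt : ‖qh ^ 2‖ < 1 := by
    rw [norm_pow]
    exact pow_lt_one₀ (norm_nonneg _) (norm_qhex_lt τ hτ) (by norm_num)
  have hltq : ‖q‖ < 1 := by rw [hq2]; exact hlt
  have hu' : Complex.exp (2 * (π : ℂ) * I * (z + τ)) = q * u := by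
    rw [hq, hu, qex, ← Complex.exp_add]; ring_nf
  have huinv : Complex.exp (-(2 * (π : ℂ) * I * z)) = u⁻¹ := by
    rw [hu, ← Complex.exp_neg]
  have huinv' : Complex.exp (-(2 * (π : ℂ) * I * (z + τ))) = (q * u)⁻¹ := by
    rw [← hu', ← Complex.exp_neg]
  have hH' : Hc τ (q * u) := by
    have := Hc_shift hH 1
    rwa [zpow_one, ← hq] at this
  have hqune : q * u ≠ 0 := mul_ne_zero hqne hune
  -- multipliability
  have Mfp : Multipliable (fun n : ℕ => 1 + (qh * u) * (qh ^ 2) ^ n) :=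
    mult_one_add hlt (hfp_of hH hune)
  have Mfm : Multipliable (fun n : ℕ => 1 + (qh * u⁻¹) * (qh ^ 2) ^ n) :=
    mult_one_add hlt (hfm_of hH hune)
  have Mfp' : Multipliable (fun n : ℕ => 1 + (qh * (q * u)) * (qh ^ 2) ^ n) :=
    mult_one_add hlt (hfp_of hH' hqune)
  have Mfm' : Multipliable (fun n : ℕ => 1 + (qh * (q * u)⁻¹) * (qh ^ 2) ^ n) :=
    mult_one_add hlt (hfm_of hH' hqune)
  have Mgp : Multipliable (fun n : ℕ => 1 + (-(q * u)) * q ^ n) :=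
    mult_one_add hltq (hgp_of hH hune)
  have Mgm : Multipliable (fun n : ℕ => 1 + (-(q * u⁻¹)) * q ^ n) :=
    mult_one_add hltq (hgm_of hH hune)
  have Mgp' : Multipliable (fun n : ℕ => 1 + (-(q * (q * u))) * q ^ n) :=
    mult_one_add hltq (hgp_of hH' hqune)
  have Mgm' : Multipliable (fun n : ℕ => 1 + (-(q * (q * u)⁻¹)) * q ^ n) :=
    mult_one_add hltq (hgm_of hH' hqune)
  -- factorizations of the theta-type products
  have eNum : (∏' n, phiNumF τ z n) =
      (∏' n : ℕ, (1 + (qh * u) * (qh ^ 2) ^ n)) * (∏' n : ℕ, (1 + (qh * u⁻¹) * (qh ^ 2) ^ n)) := by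
    rw [← Mfp.tprod_mul Mfm]
    apply tprod_congr
    intro n
    rw [phiNumF, huinv, ← hu, ← hqh]
    ring
  have eNum' : (∏' n, phiNumF τ (z + τ) n) =
      (∏' n : ℕ, (1 + (qh * (q * u)) * (qh ^ 2) ^ n)) *
        (∏' n : ℕ, (1 + (qh * (q * u)⁻¹) * (qh ^ 2) ^ n)) := by
    rw [← Mfp'.tprod_mul Mfm']
    apply tprod_congr
    intro n
    rw [phiNumF, huinv', hu', ← hqh]
    ring
  have eDen : (∏' n, phiDenF τ z n) =
      (∏' n : ℕ, (1 + (-(q * u)) * q ^ n)) * (∏' n : ℕ, (1 + (-(q * u⁻¹)) * q ^ n)) := by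
    rw [← Mgp.tprod_mul Mgm]
    apply tprod_congr
    intro n
    rw [phiDenF, huinv, ← hu, ← hq]
    ring
  have eDen' : (∏' n, phiDenF τ (z + τ) n) =
      (∏' n : ℕ, (1 + (-(q * (q * u))) * q ^ n)) *
        (∏' n : ℕ, (1 + (-(q * (q * u)⁻¹)) * q ^ n)) := by
    rw [← Mgp'.tprod_mul Mgm']
    apply tprod_congr
    intro n
    rw [phiDenF, huinv', hu', ← hq]
    ring
  -- telescoping
  have tp1 : (∏' n : ℕ, (1 + (qh * u) * (qh ^ 2) ^ n)) =
      (1 + qh * u) * (∏' n : ℕ, (1 + (qh * (q * u)) * (qh ^ 2) ^ n)) := by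
    have hmul : Multipliable (fun n : ℕ => 1 + (qh * u) * (qh ^ 2) ^ (n + 1)) := by
      apply Mfp'.congr
      intro n
      rw [hq2]
      ring
    have h := tprod_eq_zero_mul' (f := fun n : ℕ => 1 + (qh * u) * (qh ^ 2) ^ n) hmul
    rw [h]
    congr 1
    · simp
    · apply tprod_congr
      intro n
      rw [hq2]
      ring
  have tp2 : (∏' n : ℕ, (1 + (qh * (q * u)⁻¹) * (qh ^ 2) ^ n)) =
      (1 + qh * (q * u)⁻¹) * (∏' n : ℕ, (1 + (qh * u⁻¹) * (qh ^ 2) ^ n)) := by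
    have hmul : Multipliable (fun n : ℕ => 1 + (qh * (q * u)⁻¹) * (qh ^ 2) ^ (n + 1)) := by
      apply Mfm.congr
      intro n
      rw [hq2]
      field_simp
      ring
    have h := tprod_eq_zero_mul'
      (f := fun n : ℕ => 1 + (qh * (q * u)⁻¹) * (qh ^ 2) ^ n) hmul
    rw [h]
    congr 1
    · simp
    · apply tprod_congr
      intro n
      rw [hq2]
      field_simp
      ring
  have tp3 : (∏' n : ℕ, (1 + (-(q * u)) * q ^ n)) =
      (1 + -(q * u)) * (∏' n : ℕ, (1 + (-(q * (q * u))) * q ^ n)) := by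
    have hmul : Multipliable (fun n : ℕ => 1 + (-(q * u)) * q ^ (n + 1)) := by
      apply Mgp'.congr
      intro n
      ring
    have h := tprod_eq_zero_mul' (f := fun n : ℕ => 1 + (-(q * u)) * q ^ n) hmul
    rw [h]
    congr 1
    · simp
    · apply tprod_congr
      intro n
      ring
  have tp4 : (∏' n : ℕ, (1 + (-(q * (q * u)⁻¹)) * q ^ n)) =
      (1 + -(q * (q * u)⁻¹)) * (∏' n : ℕ, (1 + (-(q * u⁻¹)) * q ^ n)) := by
    have hmul : Multipliable (fun n : ℕ => 1 + (-(q * (q * u)⁻¹)) * q ^ (n + 1)) := by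
      apply Mgm.congr
      intro n
      field_simp
      ring
    have h := tprod_eq_zero_mul'
      (f := fun n : ℕ => 1 + (-(q * (q * u)⁻¹)) * q ^ n) hmul
    rw [h]
    congr 1
    · simp
    · apply tprod_congr
      intro n
      field_simp
      ring
  -- head identities
  have h5 : 1 + qh * (q * u)⁻¹ = (1 + qh * u) * (qh * u)⁻¹ := by
    rw [hq2]
    field_simp
    ring
  have h6 : 1 + -(q * (q * u)⁻¹) = 1 - u⁻¹ := by
    field_simp
    ring
  -- numerator and denominator shifts
  have hNum' : (∏' n, phiNumF τ (z + τ) n) = (qh * u)⁻¹ * (∏' n, phiNumF τ z n) := by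
    rw [eNum', tp2, h5, eNum, tp1]
    ring
  have hq1u : (1 : ℂ) - q * u ≠ 0 := by
    have := hH.2 1
    rwa [zpow_one, ← hq] at this
  have hDen' : (∏' n, phiDenF τ (z + τ) n) =
      (1 - q * u)⁻¹ * ((1 - u⁻¹) * (∏' n, phiDenF τ z n)) := by
    have hmain : (1 - q * u) * (∏' n, phiDenF τ (z + τ) n) =
        (1 - u⁻¹) * (∏' n, phiDenF τ z n) := by
      rw [eDen', tp4, h6, eDen, tp3]
      ring
    rw [← hmain, inv_mul_cancel_left₀ hq1u]
  -- S-factor shifts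
  have hSz : Sf z = Complex.exp (-((π : ℂ) * I * z)) * (1 - u) := by
    rw [Sf_eq, ← hu]
  have hS' : Sf (z + τ) = Complex.exp (-((π : ℂ) * I * z)) * qh⁻¹ * (1 - q * u) := by
    rw [Sf_eq, hu']
    have : Complex.exp (-((π : ℂ) * I * (z + τ))) =
        Complex.exp (-((π : ℂ) * I * z)) * qh⁻¹ := by
      rw [hqh, qhex, ← Complex.exp_neg, ← Complex.exp_add]
      ring_nf
    rw [this]
  -- final assembly
  set e := Complex.exp (-((π : ℂ) * I * z)) with he
  have hene : e ≠ 0 := Complex.exp_ne_zero _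
  rw [F, F, hNum', hDen', hS', hSz]
  have hden_eq : (1 - q * u)⁻¹ * ((1 - u⁻¹) * (∏' n, phiDenF τ z n)) * (e * qh⁻¹ * (1 - q * u)) =
      (qh * u)⁻¹ * -((∏' n, phiDenF τ z n) * (e * (1 - u))) := by
    field_simp
    ring
  rw [hden_eq, mul_div_mul_left _ _ (inv_ne_zero (mul_ne_zero hqhne hune)), div_neg]

lemma neg_one_zpow_cases (c : ℤ) : (-1 : ℂ) ^ c = 1 ∨ (-1 : ℂ) ^ c = -1 := by
  rcases Int.even_or_odd c with h | h
  · left; exact h.neg_one_zpow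
  · right; exact h.neg_one_zpow

lemma F_shift_int (τ z : ℂ) (c : ℤ) : F τ (z + (c : ℂ)) = (-1) ^ c * F τ z := by
  have hexp2 : Complex.exp (2 * (π : ℂ) * I * (z + (c : ℂ))) =
      Complex.exp (2 * (π : ℂ) * I * z) := by
    rw [show 2 * (π : ℂ) * I * (z + (c : ℂ)) = 2 * π * I * z + (c : ℂ) * (2 * π * I) by ring,
      Complex.exp_add, Complex.exp_int_mul_two_pi_mul_I, mul_one]
  have hexp2' : Complex.exp (-(2 * (π : ℂ) * I * (z + (c : ℂ)))) =
      Complex.exp (-(2 * (π : ℂ) * I * z)) := by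
    rw [show -(2 * (π : ℂ) * I * (z + (c : ℂ))) =
        -(2 * π * I * z) + ((-c : ℤ) : ℂ) * (2 * π * I) by push_cast; ring,
      Complex.exp_add, Complex.exp_int_mul_two_pi_mul_I, mul_one]
  have hNum : ∀ n, phiNumF τ (z + (c : ℂ)) n = phiNumF τ z n := by
    intro n; rw [phiNumF, phiNumF, hexp2, hexp2']
  have hDen : ∀ n, phiDenF τ (z + (c : ℂ)) n = phiDenF τ z n := by
    intro n; rw [phiDenF, phiDenF, hexp2, hexp2']
  have e1 : Complex.exp ((c : ℂ) * ((π : ℂ) * I)) = (-1 : ℂ) ^ c := by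
    rw [Complex.exp_int_mul, Complex.exp_pi_mul_I]
  have e1' : Complex.exp (((-c : ℤ) : ℂ) * ((π : ℂ) * I)) = ((-1 : ℂ) ^ c)⁻¹ := by
    rw [Complex.exp_int_mul, Complex.exp_pi_mul_I, zpow_neg]
  have hS : Sf (z + (c : ℂ)) = (-1) ^ c * Sf z := by
    rw [Sf, Sf,
      show -((π : ℂ) * I * (z + (c : ℂ))) =
        -((π : ℂ) * I * z) + ((-c : ℤ) : ℂ) * ((π : ℂ) * I) by push_cast; ring,
      show (π : ℂ) * I * (z + (c : ℂ)) = π * I * z + (c : ℂ) * ((π : ℂ) * I) by ring,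
      Complex.exp_add, Complex.exp_add, e1, e1']
    rcases neg_one_zpow_cases c with h | h <;> rw [h] <;> norm_num
    ring
  rw [F, F, tprod_congr hNum, tprod_congr hDen, hS]
  rcases neg_one_zpow_cases c with h | h <;> rw [h]
  · rw [one_mul, one_mul]
  · simp only [neg_one_mul, mul_neg, div_neg]

lemma Hc_exp_shift {τ z : ℂ} (hH : Hc τ (Complex.exp (2 * (π : ℂ) * I * z))) (d : ℤ) :
    Hc τ (Complex.exp (2 * (π : ℂ) * I * (z + (d : ℂ) * τ))) := by
  have h : Complex.exp (2 * (π : ℂ) * I * (z + (d : ℂ) * τ)) =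
      qex τ ^ d * Complex.exp (2 * (π : ℂ) * I * z) := by
    rw [show 2 * (π : ℂ) * I * (z + (d : ℂ) * τ) =
        (d : ℂ) * (2 * (π : ℂ) * I * τ) + 2 * (π : ℂ) * I * z by ring,
      Complex.exp_add, qex, Complex.exp_int_mul]
  rw [h]
  exact Hc_shift hH d

lemma F_shift_tau_int {τ : ℂ} (hτ : 0 < τ.im) (z : ℂ)
    (hH : Hc τ (Complex.exp (2 * (π : ℂ) * I * z))) (d : ℤ) :
    F τ (z + (d : ℂ) * τ) = (-1) ^ d * F τ z := by
  induction d using Int.induction_on with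
  | zero => simp
  | succ n ih =>
    have h1 := F_shift_tau hτ (z + ((n : ℤ) : ℂ) * τ) (Hc_exp_shift hH n)
    have harg : z + (((n : ℤ) + 1 : ℤ) : ℂ) * τ = z + ((n : ℤ) : ℂ) * τ + τ := by
      push_cast; ring
    rw [harg, h1, ih, zpow_add₀ (by norm_num : (-1 : ℂ) ≠ 0)]
    norm_num
  | pred n ih =>
    have h1 := F_shift_tau hτ (z + ((-(n : ℤ) - 1 : ℤ) : ℂ) * τ)
      (Hc_exp_shift hH (-(n : ℤ) - 1))
    have harg : z + ((-(n : ℤ) - 1 : ℤ) : ℂ) * τ + τ = z + ((-(n : ℤ) : ℤ) : ℂ) * τ := by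
      push_cast; ring
    rw [harg] at h1
    have h2 : F τ (z + ((-(n : ℤ) - 1 : ℤ) : ℂ) * τ) =
        -F τ (z + ((-(n : ℤ) : ℤ) : ℂ) * τ) := by linear_combination h1
    rw [h2, ih, show (-(n : ℤ) - 1) = (-(n : ℤ)) + (-1) by ring,
      zpow_add₀ (by norm_num : (-1 : ℂ) ≠ 0)]
    norm_num

lemma F_shift {τ : ℂ} (hτ : 0 < τ.im) (z : ℂ)
    (hH : Hc τ (Complex.exp (2 * (π : ℂ) * I * z))) (c d : ℤ) :
    F τ (z + ((c : ℂ) + (d : ℂ) * τ)) = (-1) ^ (c + d) * F τ z := by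
  have h1 : z + ((c : ℂ) + (d : ℂ) * τ) = z + (d : ℂ) * τ + (c : ℂ) := by ring
  rw [h1, F_shift_int τ _ c, F_shift_tau_int hτ z hH d, zpow_add₀ (by norm_num : (-1 : ℂ) ≠ 0)]
  ring

lemma Zdiag_eq_prod {ι : Type*} [Fintype ι] (τ ν : ℂ) (hν : ν = 1 ∨ ν = -1)
    (a : ι → ℤ) (r : ι → ℂ) (γ : ℂ) :
    Zdiag τ ν a r γ = ν * ∏ j, F τ ((a j : ℂ) * γ + r j) := by
  have h1 : ∏ j, F τ ((a j : ℂ) * γ + r j) =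
      (∏ j, ∏' n : ℕ, phiNumF τ ((a j : ℂ) * γ + r j) n) /
        ((∏ j, ∏' n : ℕ, phiDenF τ ((a j : ℂ) * γ + r j) n) *
          ∏ j, Sf ((a j : ℂ) * γ + r j)) := by
    rw [← Finset.prod_mul_distrib, ← Finset.prod_div_distrib]
    rfl
  rw [h1, Zdiag, Zstr]
  have h2 : (∏ j, (Complex.exp (-((π : ℂ) * I * ((a j : ℂ) * γ + r j))) -
      Complex.exp ((π : ℂ) * I * ((a j : ℂ) * γ + r j)))) = ∏ j, Sf ((a j : ℂ) * γ + r j) := rfl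
  rw [h2]
  rcases hν with h | h <;> rw [h]
  · rw [one_mul, one_mul]
  · simp only [neg_one_mul, mul_neg, div_neg]

lemma zpow_sum_neg_one {ι : Type*} (s : Finset ι) (f : ι → ℤ) :
    (-1 : ℂ) ^ (∑ j ∈ s, f j) = ∏ j ∈ s, (-1 : ℂ) ^ (f j) := by
  induction s using Finset.cons_induction with
  | empty => simp
  | cons a s ha ih =>
    rw [Finset.sum_cons, Finset.prod_cons, zpow_add₀ (by norm_num : (-1 : ℂ) ≠ 0), ih]

end TF

theorem transfer_formula (τ : ℂ) (hτ : 0 < τ.im)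
    (k α β : ℤ) (hk : 1 ≤ k) (γ : ℂ) (hkγ : (k : ℂ) * γ = (α : ℂ) + (β : ℂ) * τ)
    -- γ is exactly of order k in E_τ:
    (horder : ∀ l : ℤ, 0 < l → l < k → ∀ c d : ℤ, (l : ℂ) * γ ≠ (c : ℂ) + (d : ℂ) * τ)
    {m₀ m₁ : ℕ} (A : Fin m₀ → ℤ) (a₁ : Fin m₁ → ℤ) (hprim : ∀ j, ¬ (k ∣ a₁ j))
    (r₀ : Fin m₀ → ℂ) (r₁ : Fin m₁ → ℂ) (y : ℂ)
    (ν₀ ν₁ ν os : ℂ) (hν₀ : ν₀ = 1 ∨ ν₀ = -1) (hν₁ : ν₁ = 1 ∨ ν₁ = -1)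
    (hν : ν = 1 ∨ ν = -1) (hos : os = 1 ∨ os = -1)
    -- definedness hypotheses ("y sufficiently small"):
    (hpre0 : ∀ j, Complex.exp (-((π : ℂ) * I * (((k * A j : ℤ) : ℂ) * y + r₀ j))) -
      Complex.exp ((π : ℂ) * I * (((k * A j : ℤ) : ℂ) * y + r₀ j)) ≠ 0)
    (hpre0' : ∀ j, Complex.exp (-((π : ℂ) * I * (((k * A j : ℤ) : ℂ) * (γ + y) + r₀ j))) -
      Complex.exp ((π : ℂ) * I * (((k * A j : ℤ) : ℂ) * (γ + y) + r₀ j)) ≠ 0)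
    (hpre1 : ∀ j, Complex.exp (-((π : ℂ) * I * ((a₁ j : ℂ) * (γ + y) + r₁ j))) -
      Complex.exp ((π : ℂ) * I * ((a₁ j : ℂ) * (γ + y) + r₁ j)) ≠ 0)
    (hden0 : ∀ j n, phiDenF τ (((k * A j : ℤ) : ℂ) * y + r₀ j) n ≠ 0)
    (hden0' : ∀ j n, phiDenF τ (((k * A j : ℤ) : ℂ) * (γ + y) + r₀ j) n ≠ 0)
    (hden1 : ∀ j n, phiDenF τ ((a₁ j : ℂ) * (γ + y) + r₁ j) n ≠ 0)
    (hnum0 : ∀ j n, phiNumF τ (((k * A j : ℤ) : ℂ) * y + r₀ j) n ≠ 0)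
    (hnum0' : ∀ j n, phiNumF τ (((k * A j : ℤ) : ℂ) * (γ + y) + r₀ j) n ≠ 0) :
    Zdiag τ ν₀ (fun j => k * A j) (fun j => y * ((k * A j : ℤ) : ℂ) + r₀ j) 0 *
      (os ^ (α + β) * Zdiag τ ν₁ a₁ (fun j => y * ((a₁ j : ℂ)) + r₁ j) γ) =
    (os ^ (α + β) * ((-1 : ℂ) ^ (∑ j, A j)) ^ (α + β) * (ν * ν₀ * ν₁)) *
      Zdiag τ ν (Sum.elim (fun j => k * A j) a₁) (Sum.elim r₀ r₁) (γ + y) := by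
  rw [TF.Zdiag_eq_prod τ ν₀ hν₀, TF.Zdiag_eq_prod τ ν₁ hν₁, TF.Zdiag_eq_prod τ ν hν,
    Fintype.prod_sum_type]
  simp only [Sum.elim_inl, Sum.elim_inr]
  have key : ∀ j : Fin m₀, TF.F τ (((k * A j : ℤ) : ℂ) * (γ + y) + r₀ j) =
      (-1 : ℂ) ^ (A j * α + A j * β) *
        TF.F τ (((k * A j : ℤ) : ℂ) * 0 + (y * ((k * A j : ℤ) : ℂ) + r₀ j)) := by
    intro j
    set z := ((k * A j : ℤ) : ℂ) * 0 + (y * ((k * A j : ℤ) : ℂ) + r₀ j) with hz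
    have harg : ((k * A j : ℤ) : ℂ) * y + r₀ j = z := by rw [hz]; ring
    have hHj : TF.Hc τ (Complex.exp (2 * (π : ℂ) * I * z)) := by
      apply TF.Hc_of
      · intro n; rw [← harg]; exact hnum0 j n
      · intro n; rw [← harg]; exact hden0 j n
      · rw [TF.Sf, ← harg]; exact hpre0 j
    have harg2 : ((k * A j : ℤ) : ℂ) * (γ + y) + r₀ j =
        z + (((A j * α : ℤ) : ℂ) + ((A j * β : ℤ) : ℂ) * τ) := by
      rw [hz]; push_cast; linear_combination (A j : ℂ) * hkγ
    rw [harg2, TF.F_shift hτ z hHj (A j * α) (A j * β)]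
  have hprod0 : (∏ j : Fin m₀, TF.F τ (((k * A j : ℤ) : ℂ) * (γ + y) + r₀ j)) =
      (-1 : ℂ) ^ ((∑ j, A j) * (α + β)) *
        ∏ j : Fin m₀, TF.F τ (((k * A j : ℤ) : ℂ) * 0 + (y * ((k * A j : ℤ) : ℂ) + r₀ j)) := by
    rw [Finset.prod_congr rfl (fun j _ => key j), Finset.prod_mul_distrib,
      ← TF.zpow_sum_neg_one]
    congr 2
    rw [Finset.sum_add_distrib, ← Finset.sum_mul, ← Finset.sum_mul]
    ring
  have hprod1 : (∏ j : Fin m₁, TF.F τ ((a₁ j : ℂ) * (γ + y) + r₁ j)) =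
      ∏ j : Fin m₁, TF.F τ ((a₁ j : ℂ) * γ + (y * (a₁ j : ℂ) + r₁ j)) :=
    Finset.prod_congr rfl (fun j _ => by rw [show (a₁ j : ℂ) * (γ + y) + r₁ j =
      (a₁ j : ℂ) * γ + (y * (a₁ j : ℂ) + r₁ j) by ring])
  rw [hprod0, hprod1]
  set P0 := ∏ j : Fin m₀, TF.F τ (((k * A j : ℤ) : ℂ) * 0 + (y * ((k * A j : ℤ) : ℂ) + r₀ j))
    with hP0
  set P1 := ∏ j : Fin m₁, TF.F τ ((a₁ j : ℂ) * γ + (y * (a₁ j : ℂ) + r₁ j)) with hP1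
  set sgn := (-1 : ℂ) ^ ((∑ j, A j) * (α + β)) with hsgn
  have hXeq : ((-1 : ℂ) ^ (∑ j, A j)) ^ (α + β) = sgn := (zpow_mul _ _ _).symm
  have hXX : sgn * sgn = 1 := by
    rw [hsgn, ← zpow_add₀ (by norm_num : (-1 : ℂ) ≠ 0)]
    exact Even.neg_one_zpow ⟨_, rfl⟩
  have hν2 : ν * ν = 1 := by rcases hν with h | h <;> rw [h] <;> norm_num
  rw [hXeq]
  linear_combination (-(os ^ (α + β) * ν₀ * ν₁ * P0 * P1 * sgn * sgn)) * hν2 +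
    (-(os ^ (α + β) * ν₀ * ν₁ * P0 * P1)) * hXX


end
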